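/- Let n ≥ 1 be an integer and let V be an n-dimensional ℂ-linear subspace of ℂ^n × ℂ^n such that b vanishes identically on V × V and V ∩ C₀ = {0}. Then there exists a ℂ-linear automorphism g of ℂ^n × ℂ^n with det g = 1 and b(g(x), g(y)) = b(x,y) for all x, y, such that g(C₀) = C₀ and g(C₁) = V. -/

import Mathlib

/-- The symmetric bilinear form on `ℂ^n × ℂ^n` with Gram matrix `[[0,Iₙ],[Iₙ,0]]`:
`b((z,w),(z',w')) = ∑ᵢ (zᵢ w'ᵢ + wᵢ z'ᵢ)`. -/
noncomputable def hypForm (n : ℕ) (x y : (Fin n → ℂ) × (Fin n → ℂ)) : ℂ :=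
  ∑ i, (x.1 i * y.2 i + x.2 i * y.1 i)

/-- The maximal isotropic subspace `C₀ = ℂ^n × {0}`. -/
noncomputable def hypC₀ (n : ℕ) : Submodule ℂ ((Fin n → ℂ) × (Fin n → ℂ)) :=
  LinearMap.range (LinearMap.inl ℂ (Fin n → ℂ) (Fin n → ℂ))

/-- The maximal isotropic subspace `C₁ = {0} × ℂ^n`. -/
noncomputable def hypC₁ (n : ℕ) : Submodule ℂ ((Fin n → ℂ) × (Fin n → ℂ)) :=
  LinearMap.range (LinearMap.inr ℂ (Fin n → ℂ) (Fin n → ℂ))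

/-- Transitivity step of Section 4.3: for any `n`-dimensional isotropic subspace `V`
with `V ∩ C₀ = {0}` there is a linear automorphism `g` of `ℂ^n × ℂ^n` with `det g = 1`
preserving `b`, fixing `C₀` and mapping `C₁` onto `V`. -/
lemma mem_hypC₀ {n : ℕ} (x : (Fin n → ℂ) × (Fin n → ℂ)) : x ∈ hypC₀ n ↔ x.2 = 0 := by
  constructor
  · rintro ⟨z, rfl⟩; rfl
  · intro h; exact ⟨x.1, by ext : 1 <;> simp [h.symm]⟩

lemma mem_hypC₁ {n : ℕ} (x : (Fin n → ℂ) × (Fin n → ℂ)) : x ∈ hypC₁ n ↔ x.1 = 0 := by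
  constructor
  · rintro ⟨z, rfl⟩; rfl
  · intro h; exact ⟨x.2, by ext : 1 <;> simp [h.symm]⟩

theorem isotropic_complement_moved (n : ℕ) (hn : 1 ≤ n)
    (V : Submodule ℂ ((Fin n → ℂ) × (Fin n → ℂ)))
    (hdim : Module.finrank ℂ V = n)
    (hiso : ∀ x ∈ V, ∀ y ∈ V, hypForm n x y = 0)
    (hcompl : V ⊓ hypC₀ n = ⊥) :
    ∃ g : ((Fin n → ℂ) × (Fin n → ℂ)) →ₗ[ℂ] ((Fin n → ℂ) × (Fin n → ℂ)),
      LinearMap.det g = 1 ∧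
      (∀ x y, hypForm n (g x) (g y) = hypForm n x y) ∧
      (hypC₀ n).map g = hypC₀ n ∧ (hypC₁ n).map g = V := by
  classical
  set π : V →ₗ[ℂ] (Fin n → ℂ) := (LinearMap.snd ℂ _ _).comp V.subtype with hπ
  have hinj : Function.Injective π := by
    rw [← LinearMap.ker_eq_bot]
    ext v
    simp only [LinearMap.mem_ker, Submodule.mem_bot]
    constructor
    · intro hv
      have hmem : (v : (Fin n → ℂ) × (Fin n → ℂ)) ∈ V ⊓ hypC₀ n :=
        ⟨v.2, (mem_hypC₀ _).2 hv⟩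
      rw [hcompl] at hmem
      exact Subtype.ext hmem
    · rintro rfl; simp [hπ]
  have hfr : Module.finrank ℂ V = Module.finrank ℂ (Fin n → ℂ) := by
    simp [hdim]
  let e : V ≃ₗ[ℂ] (Fin n → ℂ) := LinearMap.linearEquivOfInjective π hinj hfr
  have he : ∀ v : V, e v = (v : (Fin n → ℂ) × (Fin n → ℂ)).2 := fun v => rfl
  let B : (Fin n → ℂ) →ₗ[ℂ] (Fin n → ℂ) :=
    (LinearMap.fst ℂ _ _).comp (V.subtype.comp e.symm.toLinearMap)
  have hkey : ∀ w, ((e.symm w : V) : (Fin n → ℂ) × (Fin n → ℂ)) = (B w, w) := by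
    intro w
    have h2 : ((e.symm w : V) : (Fin n → ℂ) × (Fin n → ℂ)).2 = w := by
      rw [← he]; exact e.apply_symm_apply w
    exact Prod.ext rfl h2
  have hgraph : ∀ w, ((B w, w) : (Fin n → ℂ) × (Fin n → ℂ)) ∈ V := fun w => by
    rw [← hkey]; exact (e.symm w).2
  have hrep : ∀ v ∈ V, ((B v.2, v.2) : (Fin n → ℂ) × (Fin n → ℂ)) = v := by
    intro v hv
    have := hkey v.2
    have h2 : e.symm (e ⟨v, hv⟩) = ⟨v, hv⟩ := e.symm_apply_apply _
    rw [he ⟨v, hv⟩] at h2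
    rw [← this, h2]
  have hskew : ∀ w w', ∑ i, (B w i * w' i + w i * B w' i) = 0 := by
    intro w w'
    simpa [hypForm] using hiso _ (hgraph w) _ (hgraph w')
  refine ⟨LinearMap.prod ((LinearMap.fst ℂ _ _) + B.comp (LinearMap.snd ℂ _ _))
      (LinearMap.snd ℂ _ _), ?_, ?_, ?_, ?_⟩
  · -- determinant
    set bP := (Pi.basisFun ℂ (Fin n)).prod (Pi.basisFun ℂ (Fin n)) with hbP
    set bn := Pi.basisFun ℂ (Fin n) with hbn
    rw [← LinearMap.det_toMatrix bP]
    have : LinearMap.toMatrix bP bP (LinearMap.prod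
        ((LinearMap.fst ℂ _ _) + B.comp (LinearMap.snd ℂ _ _)) (LinearMap.snd ℂ _ _)) =
        Matrix.fromBlocks 1 (LinearMap.toMatrix bn bn B) 0 1 := by
      ext i j
      rcases i with i | i <;> rcases j with j | j <;>
        simp [hbP, hbn, LinearMap.toMatrix_apply, Matrix.fromBlocks, Matrix.one_apply,
          Module.Basis.prod_repr_inl, Module.Basis.prod_repr_inr, Module.Basis.prod_apply_inl_fst,
          Module.Basis.prod_apply_inl_snd, Module.Basis.prod_apply_inr_fst, Module.Basis.prod_apply_inr_snd,
          Pi.basisFun_apply, Pi.basisFun_repr, Pi.single_apply, eq_comm]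
    rw [this, Matrix.det_fromBlocks_zero₂₁]
    simp
  · intro x y
    simp only [LinearMap.prod_apply, Pi.prod, LinearMap.add_apply, LinearMap.coe_comp,
      Function.comp_apply, LinearMap.fst_apply, LinearMap.snd_apply, hypForm]
    have := hskew x.2 y.2
    calc ∑ i, ((x.1 + B x.2) i * y.2 i + x.2 i * (y.1 + B y.2) i)
        = (∑ i, (x.1 i * y.2 i + x.2 i * y.1 i)) + ∑ i, (B x.2 i * y.2 i + x.2 i * B y.2 i) := by
          rw [← Finset.sum_add_distrib]; apply Finset.sum_congr rfl; intros; simp; ring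
      _ = ∑ i, (x.1 i * y.2 i + x.2 i * y.1 i) := by rw [this, add_zero]
  · ext x
    simp only [Submodule.mem_map, mem_hypC₀]
    constructor
    · rintro ⟨y, hy, rfl⟩; simpa using hy
    · intro hx
      refine ⟨x, hx, ?_⟩
      simp only [LinearMap.prod_apply, Function.prod_apply, LinearMap.add_apply, LinearMap.coe_comp,
        Function.comp_apply, LinearMap.fst_apply, LinearMap.snd_apply, hx]
      exact Prod.ext (by simp) hx.symm
  · ext x
    simp only [Submodule.mem_map, mem_hypC₁]
    constructor
    · rintro ⟨y, hy, rfl⟩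
      simp only [LinearMap.prod_apply, Pi.prod, LinearMap.add_apply, LinearMap.coe_comp,
        Function.comp_apply, LinearMap.fst_apply, LinearMap.snd_apply, hy]
      simpa [hy] using hgraph y.2
    · intro hx
      refine ⟨(0, x.2), rfl, ?_⟩
      have := hrep x hx
      simp only [LinearMap.prod_apply, Function.prod_apply, LinearMap.add_apply, LinearMap.coe_comp,
        Function.comp_apply, LinearMap.fst_apply, LinearMap.snd_apply, zero_add]
      rw [← this]
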